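/- Let p ≥ 2 and n ≥ 1 be integers. Let r : Fin p → Fin p → ZMod p be given by r i j = (-1)^(j : ℕ) * (Nat.choose (i : ℕ) (j : ℕ)), and for F : (Fin n → Fin p) → ZMod p define RMF(F)(x) = Σ_{y : Fin n → Fin p} (∏_{i : Fin n} r (x i) (y i)) * F y. Let ρ : Fin n → Fin n be the cyclic shift ρ(i) = i + 1, and say x ~ y iff y = x ∘ ρ^m for some m ∈ ℕ. Let R ⊆ (Fin n → Fin p) be a finite set containing exactly one element of each ~-orbit. Let F : (Fin n → Fin p) → ZMod p be rotation symmetric, i.e. F(x ∘ ρ) = F(x) for all x. Then for every w : Fin n → Fin p, F(w) = Σ_{v ∈ R} RMF(F)(v) * RMF(φ_v)(w), where φ_v(y) = 1 if y ~ v and φ_v(y) = 0 otherwise. -/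

import Mathlib

/-- Entry of the basic Reed–Muller–Fourier matrix over ℤ/pℤ. -/
def rmfEntry (p : ℕ) (i j : Fin p) : ZMod p :=
  (-1) ^ (j : ℕ) * (Nat.choose (i : ℕ) (j : ℕ) : ZMod p)

/-- n-variable Reed–Muller–Fourier transform (n-fold Kronecker power). -/
def RMF (p n : ℕ) (F : (Fin n → Fin p) → ZMod p) (x : Fin n → Fin p) : ZMod p :=
  ∑ y : Fin n → Fin p, (∏ i : Fin n, rmfEntry p (x i) (y i)) * F y

/-- The cyclic shift of the indices. -/
def rho (n : ℕ) [NeZero n] (i : Fin n) : Fin n := i + 1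

/-- The cyclic-shift orbit relation: `x ~ y` iff `y = x ∘ ρ^[m]` for some `m`. -/
def orbRel (p n : ℕ) [NeZero n] (x y : Fin n → Fin p) : Prop :=
  ∃ m : ℕ, y = x ∘ (rho n)^[m]

open Classical in
/-- The elementary rotation symmetric function attached to `v`:
the indicator of the cyclic-shift orbit of `v`. -/
noncomputable def phi (p n : ℕ) [NeZero n] (v y : Fin n → Fin p) : ZMod p :=
  if orbRel p n y v then 1 else 0


-- auxiliary lemmas
lemma key_int (p a b : ℕ) (ha : a < p) (hb : b < p) :
    (∑ k ∈ Finset.range p, ((-1:ℤ)^k * a.choose k) * ((-1:ℤ)^b * (Nat.choose k b))) =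
      if a = b then 1 else 0 := by
  have h1 : (∑ k ∈ Finset.range p, ((-1:ℤ)^k * a.choose k) * ((-1:ℤ)^b * (Nat.choose k b)))
      = ∑ k ∈ Finset.Ico b p, ((-1:ℤ)^k * a.choose k) * ((-1:ℤ)^b * (Nat.choose k b)) := by
    rw [Finset.range_eq_Ico]
    refine (Finset.sum_subset (Finset.Ico_subset_Ico (Nat.zero_le _) le_rfl) ?_).symm
    intro k hk hk'
    simp only [Finset.mem_Ico, Nat.zero_le, true_and] at hk hk'
    have : k < b := by omega
    simp [Nat.choose_eq_zero_of_lt this]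
  rw [h1, Finset.sum_Ico_eq_sum_range]
  rcases lt_or_ge a b with hab | hba
  · rw [if_neg (by omega)]
    apply Finset.sum_eq_zero
    intro j _
    have : a < b + j := by omega
    simp [Nat.choose_eq_zero_of_lt this]
  · have key : ∀ j : ℕ, a.choose (b + j) * (b + j).choose b = a.choose b * (a - b).choose j := by
      intro j
      rcases le_or_gt (b + j) a with h | h
      · have := Nat.choose_mul (n := a) (k := b + j) (s := b) (by omega)
        simpa [Nat.add_sub_cancel_left] using this
      · rw [Nat.choose_eq_zero_of_lt h, Nat.choose_eq_zero_of_lt (by omega : a - b < j)]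
        ring
    have h2 : ∀ j ∈ Finset.range (p - b),
        ((-1:ℤ)^(b+j) * a.choose (b+j)) * ((-1:ℤ)^b * ((b+j).choose b)) =
          (a.choose b : ℤ) * ((-1)^j * ((a-b).choose j)) := by
      intro j _
      have : ((a.choose (b+j) * (b+j).choose b : ℕ) : ℤ) = ((a.choose b * (a-b).choose j : ℕ) : ℤ) := by
        exact_mod_cast key j
      push_cast at this
      have hsign : ((-1:ℤ))^(b+j) * (-1)^b = (-1)^j := by
        calc ((-1:ℤ))^(b+j) * (-1)^b = ((-1:ℤ)^b*(-1)^b)*(-1)^j := by rw [pow_add]; ring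
          _ = (-1)^j := by rw [← pow_add, ← two_mul, pow_mul, neg_one_sq, one_pow, one_mul]
      calc ((-1:ℤ)^(b+j) * a.choose (b+j)) * ((-1:ℤ)^b * ((b+j).choose b))
          = ((-1:ℤ)^(b+j) * (-1)^b) * (a.choose (b+j) * (b+j).choose b) := by ring
        _ = (-1:ℤ)^j * (a.choose b * (a-b).choose j) := by rw [hsign, this]
        _ = (a.choose b : ℤ) * ((-1)^j * ((a-b).choose j)) := by ring
    rw [Finset.sum_congr rfl h2, ← Finset.mul_sum]
    have h3 : (∑ j ∈ Finset.range (p - b), ((-1:ℤ)^j * ((a-b).choose j)))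
        = ∑ j ∈ Finset.range (a - b + 1), ((-1:ℤ)^j * ((a-b).choose j)) := by
      refine (Finset.sum_subset ?_ ?_).symm
      · intro j hj; simp only [Finset.mem_range] at *; omega
      · intro j hj hj'
        simp only [Finset.mem_range] at hj hj'
        simp [Nat.choose_eq_zero_of_lt (by omega : a - b < j)]
    rw [h3, Int.alternating_sum_range_choose]
    rcases eq_or_ne a b with h | h
    · simp [h]
    · rw [if_neg (by omega : ¬ a - b = 0), if_neg h, mul_zero]

lemma rmf_orth (p : ℕ) (a b : Fin p) :
    ∑ k : Fin p, rmfEntry p a k * rmfEntry p k b = if a = b then 1 else 0 := by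
  have h := key_int p a b a.isLt b.isLt
  have h2 : ((∑ k ∈ Finset.range p,
      ((-1:ℤ)^k * ((a:ℕ).choose k : ℤ)) * ((-1:ℤ)^(b:ℕ) * ((Nat.choose k (b:ℕ) : ℕ) : ℤ))
        : ℤ) : ZMod p) = if (a:ℕ) = (b:ℕ) then 1 else 0 := by
    rw [h]; split <;> simp
  rw [← Fin.sum_univ_eq_sum_range
    (fun k => ((-1:ℤ)^k * ((a:ℕ).choose k : ℤ)) * ((-1:ℤ)^(b:ℕ) * ((Nat.choose k (b:ℕ) : ℕ) : ℤ)))] at h2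
  push_cast at h2
  simp only [Fin.ext_iff]
  rw [← h2]
  refine Finset.sum_congr rfl fun k _ => ?_
  simp [rmfEntry]

lemma rmf_involutive (p n : ℕ) (G : (Fin n → Fin p) → ZMod p) (w : Fin n → Fin p) :
    RMF p n (RMF p n G) w = G w := by
  unfold RMF
  calc ∑ y : Fin n → Fin p, (∏ i, rmfEntry p (w i) (y i)) *
          ∑ z : Fin n → Fin p, (∏ i, rmfEntry p (y i) (z i)) * G z
      = ∑ z : Fin n → Fin p,
          (∑ y : Fin n → Fin p, ∏ i, rmfEntry p (w i) (y i) * rmfEntry p (y i) (z i)) * G z := by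
        simp_rw [Finset.mul_sum]
        rw [Finset.sum_comm]
        refine Finset.sum_congr rfl fun z _ => ?_
        rw [Finset.sum_mul]
        refine Finset.sum_congr rfl fun y _ => ?_
        rw [Finset.prod_mul_distrib]; ring
    _ = ∑ z : Fin n → Fin p,
          (∏ i, ∑ k : Fin p, rmfEntry p (w i) k * rmfEntry p k (z i)) * G z := by
        refine Finset.sum_congr rfl fun z _ => ?_
        rw [Finset.prod_univ_sum]
        simp
    _ = G w := by
        simp_rw [rmf_orth]
        have key : ∀ z : Fin n → Fin p,
            (∏ i, if w i = z i then (1 : ZMod p) else 0) = if w = z then 1 else 0 := by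
          intro z
          by_cases h : w = z
          · simp [h]
          · rw [if_neg h]
            obtain ⟨i, hi⟩ := Function.ne_iff.mp h
            exact Finset.prod_eq_zero (Finset.mem_univ i) (by simp [hi])
        simp_rw [key]
        simp

lemma rho_bijective (n : ℕ) [NeZero n] : Function.Bijective (rho n) := by
  have : rho n = ⇑(Equiv.addRight (1 : Fin n)) := by funext i; rfl
  rw [this]; exact (Equiv.addRight (1 : Fin n)).bijective

lemma comp_rho_bijective (p n : ℕ) [NeZero n] :
    Function.Bijective (fun y : Fin n → Fin p => y ∘ rho n) := by
  have : (fun y : Fin n → Fin p => y ∘ rho n) =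
      ⇑(Equiv.arrowCongr (Equiv.addRight (1 : Fin n)).symm (Equiv.refl (Fin p))) := by
    funext y; funext i; rfl
  rw [this]; exact (Equiv.arrowCongr _ _).bijective

lemma rmf_shift (p n : ℕ) [NeZero n] (F : (Fin n → Fin p) → ZMod p)
    (hF : ∀ x : Fin n → Fin p, F (x ∘ rho n) = F x) (x : Fin n → Fin p) :
    RMF p n F (x ∘ rho n) = RMF p n F x := by
  unfold RMF
  refine (Fintype.sum_bijective _ (comp_rho_bijective p n)
    (fun y => (∏ i, rmfEntry p (x i) (y i)) * F y)
    (fun y => (∏ i, rmfEntry p ((x ∘ rho n) i) (y i)) * F y) fun y => ?_).symm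
  simp only [Function.comp_apply]
  rw [hF]
  congr 1
  exact (Function.Bijective.prod_comp (rho_bijective n)
    (fun i => rmfEntry p (x i) (y i))).symm

lemma rmf_shift_iter (p n : ℕ) [NeZero n] (F : (Fin n → Fin p) → ZMod p)
    (hF : ∀ x : Fin n → Fin p, F (x ∘ rho n) = F x) (x : Fin n → Fin p) (m : ℕ) :
    RMF p n F (x ∘ (rho n)^[m]) = RMF p n F x := by
  induction m with
  | zero => simp
  | succ m ih =>
    have : x ∘ (rho n)^[m + 1] = (x ∘ (rho n)^[m]) ∘ rho n := by
      rw [Function.iterate_succ]; rfl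
    rw [this, rmf_shift p n F hF, ih]


/-- A rotation symmetric function is recovered from its RMF spectrum as the
combination of the RMF spectra of the elementary rotation symmetric functions,
weighted by the spectral values on the orbit representatives. -/
theorem rmf_inverse_from_compact (p n : ℕ) (hp : 2 ≤ p) [NeZero n]
    (R : Finset (Fin n → Fin p))
    (hR : ∀ x : Fin n → Fin p, ∃! v, v ∈ R ∧ orbRel p n x v)
    (F : (Fin n → Fin p) → ZMod p)
    (hF : ∀ x : Fin n → Fin p, F (x ∘ rho n) = F x) :
    ∀ w : Fin n → Fin p,
      F w = ∑ v ∈ R, RMF p n F v * RMF p n (phi p n v) w := by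
  intro w
  symm
  calc ∑ v ∈ R, RMF p n F v * RMF p n (phi p n v) w
      = ∑ v ∈ R, ∑ y : Fin n → Fin p,
          (∏ i, rmfEntry p (w i) (y i)) * (RMF p n F v * phi p n v y) := by
        refine Finset.sum_congr rfl fun v _ => ?_
        rw [show RMF p n (phi p n v) w
            = ∑ y : Fin n → Fin p, (∏ i, rmfEntry p (w i) (y i)) * phi p n v y from rfl,
          Finset.mul_sum]
        exact Finset.sum_congr rfl fun y _ => by ring
    _ = ∑ y : Fin n → Fin p,
          (∏ i, rmfEntry p (w i) (y i)) * (∑ v ∈ R, RMF p n F v * phi p n v y) := by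
        rw [Finset.sum_comm]
        exact Finset.sum_congr rfl fun y _ => by rw [Finset.mul_sum]
    _ = ∑ y : Fin n → Fin p, (∏ i, rmfEntry p (w i) (y i)) * RMF p n F y := by
        refine Finset.sum_congr rfl fun y _ => ?_
        congr 1
        obtain ⟨v₀, ⟨hv₀R, hrel⟩, huniq⟩ := hR y
        rw [Finset.sum_eq_single v₀]
        · obtain ⟨m, hm⟩ := hrel
          simp only [phi]
          rw [if_pos ⟨m, hm⟩, mul_one, hm]
          exact rmf_shift_iter p n F hF y m
        · intro v hv hne
          simp only [phi]
          rw [if_neg, mul_zero]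
          intro hrel'
          exact hne (huniq v ⟨hv, hrel'⟩)
        · intro h; exact absurd hv₀R h
    _ = F w := rmf_involutive p n F w
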